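/- Let φ : S → L^p(Ω) be a summative and separating map on a tree S ⊆ ℕ* whose range has dense linear span, and let M, N be disjointly supported complementary subspaces of L^p(Ω). Then P_M ∘ φ is summative, separating, and its range has dense linear span in M. -/
import Mathlib


open MeasureTheory

/-- `S ⊆ ℕ*` is a tree: closed under initial segments. -/
def IsTree (S : Set (List ℕ)) : Prop :=
  ∀ ν ∈ S, ∀ ν' : List ℕ, ν' <+: ν → ν' ∈ S

/-- `φ` is summative on `S`: for every nonterminal `ν ∈ S`, `φ ν` is the sum of the values
of `φ` at the children of `ν` in `S`. -/
def Summative {α : Type*} [MeasurableSpace α] {μ : Measure α} {p : ENNReal}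
    [Fact (1 ≤ p)] (S : Set (List ℕ)) (φ : List ℕ → Lp ℂ p μ) : Prop :=
  ∀ ν ∈ S, (∃ k : ℕ, ν ++ [k] ∈ S) →
    HasSum (fun k : {k : ℕ // ν ++ [k] ∈ S} => φ (ν ++ [k.1])) (φ ν)

/-- `φ` is separating on `S`: values at incomparable nodes are disjointly supported. -/
def Separating {α : Type*} [MeasurableSpace α] {μ : Measure α} {p : ENNReal}
    (S : Set (List ℕ)) (φ : List ℕ → Lp ℂ p μ) : Prop :=
  ∀ ν ∈ S, ∀ ν' ∈ S, ¬ ν <+: ν' → ¬ ν' <+: ν →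
    (φ ν : _ → ℂ) * (φ ν' : _ → ℂ) =ᵐ[μ] 0

/-- If `φ : S → L^p(Ω)` is summative and separating with linearly dense range, and `M`, `N`
are disjointly supported complementary subspaces with projection `P_M`, then `P_M ∘ φ` is
summative, separating, and its range has dense linear span in `M`. -/
theorem stmt11 {α : Type*} [MeasurableSpace α] (μ : Measure α) (p : ℝ) (hp : 1 ≤ p)
    [Fact (1 ≤ ENNReal.ofReal p)]
    (S : Set (List ℕ)) (hS : IsTree S) (φ : List ℕ → Lp ℂ (ENNReal.ofReal p) μ)
    (hsum : Summative S φ) (hsep : Separating S φ)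
    (hdense : Dense ((Submodule.span ℂ (φ '' S) :
      Submodule ℂ (Lp ℂ (ENNReal.ofReal p) μ)) : Set (Lp ℂ (ENNReal.ofReal p) μ)))
    (M N : Submodule ℂ (Lp ℂ (ENNReal.ofReal p) μ))
    (hdisj : ∀ f ∈ M, ∀ g ∈ N, (f : α → ℂ) * (g : α → ℂ) =ᵐ[μ] 0)
    (hinf : M ⊓ N = ⊥) (hsup : M ⊔ N = ⊤)
    (P : Lp ℂ (ENNReal.ofReal p) μ →ₗ[ℂ] Lp ℂ (ENNReal.ofReal p) μ)
    (hPM : ∀ f ∈ M, P f = f) (hPN : ∀ f ∈ N, P f = 0) (hPran : ∀ f, P f ∈ M) :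
    Summative S (fun ν => P (φ ν)) ∧ Separating S (fun ν => P (φ ν)) ∧
    ∀ f ∈ M, f ∈ closure ((Submodule.span ℂ ((fun ν => P (φ ν)) '' S) :
      Submodule ℂ (Lp ℂ (ENNReal.ofReal p) μ)) : Set (Lp ℂ (ENNReal.ofReal p) μ)) := by
  classical
  -- a.e., `P f` agrees with `f` or vanishes
  have key : ∀ f : Lp ℂ (ENNReal.ofReal p) μ,
      ∀ᵐ x ∂μ, (P f : α → ℂ) x = 0 ∨ (P f : α → ℂ) x = (f : α → ℂ) x := by
    intro f
    obtain ⟨m, hm, n, hn, hmn⟩ := Submodule.mem_sup.mp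
      (show f ∈ M ⊔ N by rw [hsup]; exact Submodule.mem_top)
    have hPf : P f = m := by
      rw [← hmn, map_add, hPM m hm, hPN n hn, add_zero]
    have h1 : (m : α → ℂ) * (n : α → ℂ) =ᵐ[μ] 0 := hdisj m hm n hn
    have h2 : (f : α → ℂ) =ᵐ[μ] (m : α → ℂ) + (n : α → ℂ) := by
      rw [← hmn]; exact Lp.coeFn_add m n
    rw [hPf]
    filter_upwards [h1, h2] with x hx1 hx2
    have := mul_eq_zero.mp hx1
    rcases this with h | h
    · exact Or.inl h
    · right
      rw [hx2, Pi.add_apply, h, add_zero]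
  have hbound : ∀ f, ‖P f‖ ≤ 1 * ‖f‖ := by
    intro f
    rw [one_mul, Lp.norm_def, Lp.norm_def]
    refine ENNReal.toReal_mono (Lp.eLpNorm_ne_top f) ?_
    refine eLpNorm_mono_ae ?_
    filter_upwards [key f] with x hx
    rcases hx with h | h <;> simp [h]
  let P' : Lp ℂ (ENNReal.ofReal p) μ →L[ℂ] Lp ℂ (ENNReal.ofReal p) μ :=
    P.mkContinuous 1 hbound
  refine ⟨?_, ?_, ?_⟩
  · intro ν hν hk
    exact (hsum ν hν hk).mapL P'
  · intro ν hν ν' hν' h1 h2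
    filter_upwards [key (φ ν), key (φ ν'), hsep ν hν ν' hν' h1 h2] with x a b c
    simp only [Pi.mul_apply, Pi.zero_apply] at c ⊢
    rcases a with a | a
    · rw [a, zero_mul]
    rcases b with b | b
    · rw [b, mul_zero]
    rw [a, b]; exact c
  · intro f hf
    have hf' : f ∈ closure ((Submodule.span ℂ (φ '' S) :
        Submodule ℂ (Lp ℂ (ENNReal.ofReal p) μ)) : Set (Lp ℂ (ENNReal.ofReal p) μ)) :=
      hdense f
    have himg : P' f ∈ closure (P' '' ((Submodule.span ℂ (φ '' S) :
        Submodule ℂ (Lp ℂ (ENNReal.ofReal p) μ)) : Set (Lp ℂ (ENNReal.ofReal p) μ))) :=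
      image_closure_subset_closure_image P'.continuous ⟨f, hf', rfl⟩
    have hPf : P' f = f := hPM f hf
    rw [hPf] at himg
    refine closure_mono ?_ himg
    rintro _ ⟨g, hg, rfl⟩
    have hmap : Submodule.map P (Submodule.span ℂ (φ '' S)) =
        Submodule.span ℂ ((fun ν => P (φ ν)) '' S) := by
      rw [Submodule.map_span, Set.image_image]
    show P g ∈ (Submodule.span ℂ ((fun ν => P (φ ν)) '' S) :
      Submodule ℂ (Lp ℂ (ENNReal.ofReal p) μ))
    rw [← hmap]
    exact Submodule.mem_map_of_mem hg
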